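/- Good-λ / weighted iteration theorem: Let A be continuous adapted with A₀ = 0 and Ψ cádlág adapted positive on [0,R]. Suppose there is θ ∈ (0,1/2) such that ℙ_B(|A_R − A_σ| > ν) ≤ θ + W_Ψ(B,ν;σ)/ℙ(B) for all ν > 0, stopping times σ, and B ∈ 𝒢_σ of positive measure, where W_Ψ(B,ν;σ) := ℙ(B ∩ {sup_{u∈[σ,R]} Ψ_u > ν}). Then there exist constants a, α > 0 depending only on θ such that ℙ_B(sup_{u∈[σ,R]}|A_u − A_σ| > λ + aμν) ≤ e^{1−μ}·ℙ_B(sup_{u∈[σ,R]}|A_u − A_σ| > λ) + α·W_Ψ(B,ν;σ)/ℙ(B) for all λ, μ, ν > 0. -/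

import Mathlib

open MeasureTheory Set Filter

section HitAux

variable {Ω : Type*}

open Classical in
/-- First time in `[ρ ω, R]` that `|A u ω - A (ρ ω) ω| ≥ c`, defaulting to `R`. -/
noncomputable def hitT (A : ℝ → Ω → ℝ) (R : ℝ) (ρ : Ω → ℝ) (c : ℝ) (ω : Ω) : ℝ :=
  if ∃ u ∈ Set.Icc (ρ ω) R, c ≤ |A u ω - A (ρ ω) ω| then
    sInf {u | u ∈ Set.Icc (ρ ω) R ∧ c ≤ |A u ω - A (ρ ω) ω|}
  else R

variable {A : ℝ → Ω → ℝ} {R : ℝ} {ρ : Ω → ℝ} {c t : ℝ} {ω : Ω}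

lemma hitT_setClosed (hA : Continuous fun r => A r ω) :
    IsClosed {u | u ∈ Set.Icc (ρ ω) R ∧ c ≤ |A u ω - A (ρ ω) ω|} := by
  have : {u | u ∈ Set.Icc (ρ ω) R ∧ c ≤ |A u ω - A (ρ ω) ω|}
      = Set.Icc (ρ ω) R ∩ (fun u => |A u ω - A (ρ ω) ω|) ⁻¹' Set.Ici c := rfl
  rw [this]
  exact isClosed_Icc.inter (IsClosed.preimage (by fun_prop) isClosed_Ici)

lemma hitT_mem_Icc (hρ : ρ ω ≤ R) : hitT A R ρ c ω ∈ Set.Icc (ρ ω) R := by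
  unfold hitT
  split_ifs with h
  · obtain ⟨u, hu, hcu⟩ := h
    constructor
    · exact le_csInf ⟨u, hu, hcu⟩ (fun v hv => hv.1.1)
    · exact le_trans (csInf_le ⟨ρ ω, fun v hv => hv.1.1⟩ ⟨hu, hcu⟩) hu.2
  · exact ⟨hρ, le_rfl⟩

lemma hitT_of_not_exists (h : ¬ ∃ u ∈ Set.Icc (ρ ω) R, c ≤ |A u ω - A (ρ ω) ω|) :
    hitT A R ρ c ω = R := by
  rw [hitT, if_neg h]

lemma hitT_mem_set (hA : Continuous fun r => A r ω)
    (h : ∃ u ∈ Set.Icc (ρ ω) R, c ≤ |A u ω - A (ρ ω) ω|) :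
    hitT A R ρ c ω ∈ Set.Icc (ρ ω) R ∧ c ≤ |A (hitT A R ρ c ω) ω - A (ρ ω) ω| := by
  have := (hitT_setClosed (c := c) hA).csInf_mem (s := _)
    (by exact ⟨_, h.choose_spec.1, h.choose_spec.2⟩) ⟨ρ ω, fun v hv => hv.1.1⟩
  simpa only [hitT, if_pos h, Set.mem_setOf_eq] using this

lemma hitT_le {u : ℝ} (hu : u ∈ Set.Icc (ρ ω) R) (hcu : c ≤ |A u ω - A (ρ ω) ω|) :
    hitT A R ρ c ω ≤ u := by
  rw [hitT, if_pos ⟨u, hu, hcu⟩]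
  exact csInf_le ⟨ρ ω, fun v hv => hv.1.1⟩ ⟨hu, hcu⟩

/-- At the hitting time, on the hit event, the value is exactly `c` (for `c > 0`). -/
lemma hitT_value (hA : Continuous fun r => A r ω) (hc : 0 < c) (hρ : ρ ω ≤ R)
    (h : ∃ u ∈ Set.Icc (ρ ω) R, c ≤ |A u ω - A (ρ ω) ω|) :
    |A (hitT A R ρ c ω) ω - A (ρ ω) ω| = c := by
  obtain ⟨hmem, hge⟩ := hitT_mem_set hA h
  refine le_antisymm ?_ hge
  set τ := hitT A R ρ c ω with hτ
  have hρτ : ρ ω < τ := by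
    rcases eq_or_lt_of_le hmem.1 with heq | hlt
    · exfalso
      rw [← heq] at hge
      simp at hge
      linarith
    · exact hlt
  by_contra hgt
  push_neg at hgt
  have hcont : ContinuousAt (fun u => |A u ω - A (ρ ω) ω|) τ := by fun_prop
  have hev : ∀ᶠ v in nhds τ, c < |A v ω - A (ρ ω) ω| := hcont.eventually (eventually_gt_nhds hgt)
  obtain ⟨δ, hδ, hball⟩ := Metric.eventually_nhds_iff.mp hev
  set v := max (ρ ω) (τ - δ / 2) with hv
  have hvlt : v < τ := by
    apply max_lt hρτ; linarith
  have hvmem : v ∈ Set.Icc (ρ ω) R := ⟨le_max_left _ _, le_trans hvlt.le hmem.2⟩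
  have hvdist : dist v τ < δ := by
    rw [Real.dist_eq, abs_of_nonpos (by linarith [le_max_right (ρ ω) (τ - δ/2)] : v - τ ≤ 0)]
    rw [neg_sub]
    have : τ - max (ρ ω) (τ - δ/2) ≤ τ - (τ - δ/2) := by
      have := le_max_right (ρ ω) (τ - δ / 2); linarith
    linarith
  have := hball hvdist
  exact absurd (hitT_le hvmem this.le) (not_le.2 hvlt)

/-- The hit event equals a condition on the stopped value. -/
lemma hitT_event (hA : Continuous fun r => A r ω) (hρ : ρ ω ≤ R) :
    (∃ u ∈ Set.Icc (ρ ω) R, c ≤ |A u ω - A (ρ ω) ω|) ↔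
      c ≤ |A (hitT A R ρ c ω) ω - A (ρ ω) ω| := by
  constructor
  · exact fun h => (hitT_mem_set hA h).2
  · exact fun h => ⟨hitT A R ρ c ω, hitT_mem_Icc hρ, h⟩

/-- characterization of `{hitT ≤ t}` for `t < R`. -/
lemma hitT_le_iff (hA : Continuous fun r => A r ω) (hρR : ρ ω ≤ R) (ht : t < R) :
    hitT A R ρ c ω ≤ t ↔ ρ ω ≤ t ∧ ∃ u ∈ Set.Icc (ρ ω) t, c ≤ |A u ω - A (ρ ω) ω| := by
  constructor
  · intro h
    have hρt : ρ ω ≤ t := le_trans (hitT_mem_Icc hρR).1 h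
    refine ⟨hρt, ?_⟩
    by_cases hex : ∃ u ∈ Set.Icc (ρ ω) R, c ≤ |A u ω - A (ρ ω) ω|
    · obtain ⟨hmem, hval⟩ := hitT_mem_set hA hex
      exact ⟨hitT A R ρ c ω, ⟨hmem.1, h⟩, hval⟩
    · exfalso
      rw [hitT_of_not_exists hex] at h; linarith
  · rintro ⟨hρt, u, hu, hcu⟩
    exact le_trans (hitT_le ⟨hu.1, le_trans hu.2 ht.le⟩ hcu) hu.2

/-- countable characterization of the exists over the compact interval. -/
lemma exists_iff_rat (hA : Continuous fun r => A r ω) (hρt : ρ ω ≤ t) :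
    (∃ u ∈ Set.Icc (ρ ω) t, c ≤ |A u ω - A (ρ ω) ω|) ↔
      ∀ n : ℕ, ∃ q : ℚ, c - 1/(n+1) <
        |A (min (max (q : ℝ) (ρ ω)) t) ω - A (ρ ω) ω| := by
  constructor
  · rintro ⟨u, hu, hcu⟩ n
    have hε : (0:ℝ) < 1/(n+1) := by positivity
    have hcont : ContinuousAt (fun v => |A v ω - A (ρ ω) ω|) u := by fun_prop
    have hev : ∀ᶠ v in nhds u, c - 1/(n+1) < |A v ω - A (ρ ω) ω| :=
      hcont.eventually (eventually_gt_nhds (by linarith))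
    obtain ⟨δ, hδ, hball⟩ := Metric.eventually_nhds_iff.mp hev
    rcases eq_or_lt_of_le hu.1 with heq | hlt
    · obtain ⟨q, hq⟩ := exists_rat_lt (ρ ω)
      refine ⟨q, ?_⟩
      have : min (max (q:ℝ) (ρ ω)) t = u := by
        rw [max_eq_right hq.le, min_eq_left hρt, ← heq]
      rw [this]
      exact hball (by simpa using hδ)
    · obtain ⟨q, hq1, hq2⟩ := exists_rat_btwn (max_lt hlt (by linarith : u - δ < u))
      refine ⟨q, ?_⟩
      have h1 : max (q:ℝ) (ρ ω) = (q:ℝ) :=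
        max_eq_left (le_of_lt (lt_of_le_of_lt (le_max_left _ _) hq1))
      have h2 : min (q:ℝ) t = (q:ℝ) := min_eq_left (le_trans hq2.le hu.2)
      rw [h1, h2]
      refine hball ?_
      rw [Real.dist_eq, abs_lt]
      have := lt_of_le_of_lt (le_max_right (ρ ω) (u - δ)) hq1
      constructor <;> linarith
  · intro hn
    obtain ⟨u₀, hu₀, hmax⟩ := isCompact_Icc.exists_isMaxOn (Set.nonempty_Icc.2 hρt)
      (Continuous.continuousOn (by fun_prop : Continuous fun v => |A v ω - A (ρ ω) ω|))
    refine ⟨u₀, hu₀, ?_⟩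
    by_contra hlt
    push_neg at hlt
    obtain ⟨n, hn'⟩ := exists_nat_one_div_lt (show (0:ℝ) < c - |A u₀ ω - A (ρ ω) ω| by linarith)
    obtain ⟨q, hq⟩ := hn n
    have hmem : min (max (q:ℝ) (ρ ω)) t ∈ Set.Icc (ρ ω) t :=
      ⟨le_min (le_max_right _ _) hρt, min_le_right _ _⟩
    have := hmax hmem
    simp only [isMaxOn_iff] at *
    have h2 : |A (min (max (q:ℝ) (ρ ω)) t) ω - A (ρ ω) ω| ≤ |A u₀ ω - A (ρ ω) ω| := this
    have : (1:ℝ)/(n+1) = 1/(↑n+1) := by norm_num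
    linarith [hq, hn']

variable {m0 : MeasurableSpace Ω} {𝒢 : Filtration ℝ m0}

lemma measurable_clamped (hprog : ProgMeasurable 𝒢 A) (hρ : IsStoppingTime 𝒢 (fun ω => (ρ ω : WithTop ℝ))) (q : ℚ) (t : ℝ) :
    Measurable[𝒢 t] fun ω => A (min (max (q : ℝ) (ρ ω)) t) ω := by
  have hst : IsStoppingTime 𝒢 fun ω => ((min (max (q : ℝ) (ρ ω)) t : ℝ) : WithTop ℝ) := by
    have := (hρ.max_const (q : ℝ)).min_const t
    simpa [max_comm, WithTop.coe_min, WithTop.coe_max] using this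
  have := measurable_stoppedValue hprog hst
  exact this.mono (hst.measurableSpace_le_of_le_const fun ω => WithTop.coe_le_coe.2 (min_le_right _ _)) le_rfl

lemma measurable_min_t (hprog : ProgMeasurable 𝒢 A) (hρ : IsStoppingTime 𝒢 (fun ω => (ρ ω : WithTop ℝ))) (t : ℝ) :
    Measurable[𝒢 t] fun ω => A (min (ρ ω) t) ω := by
  have hst : IsStoppingTime 𝒢 fun ω => ((min (ρ ω) t : ℝ) : WithTop ℝ) := by
    simpa [WithTop.coe_min] using hρ.min_const t
  exact (measurable_stoppedValue hprog hst).mono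
    (hst.measurableSpace_le_of_le_const fun ω => WithTop.coe_le_coe.2 (min_le_right _ _)) le_rfl

lemma hitT_isStoppingTime (hAadapted : Adapted 𝒢 A)
    (hAcont : ∀ ω, Continuous fun r => A r ω)
    (hρ : IsStoppingTime 𝒢 (fun ω => (ρ ω : WithTop ℝ))) (hρmem : ∀ ω, ρ ω ∈ Set.Icc 0 R) :
    IsStoppingTime 𝒢 (fun ω => (hitT A R ρ c ω : WithTop ℝ)) := by
  have hprog : ProgMeasurable 𝒢 A := StronglyAdapted.progMeasurable_of_continuous
    (fun i => (hAadapted i).stronglyMeasurable) hAcont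
  intro t
  show MeasurableSet[𝒢 t] {ω | ((hitT A R ρ c ω : ℝ) : WithTop ℝ) ≤ (t : WithTop ℝ)}
  simp only [WithTop.coe_le_coe]
  rcases le_or_gt R t with hRt | htR
  · have : {ω | hitT A R ρ c ω ≤ t} = Set.univ := by
      ext ω
      simp only [Set.mem_setOf_eq, Set.mem_univ, iff_true]
      exact le_trans (hitT_mem_Icc (hρmem ω).2).2 hRt
    rw [this]; exact MeasurableSet.univ
  · have hset : {ω | hitT A R ρ c ω ≤ t} = {ω | ρ ω ≤ t} ∩
        ⋂ n : ℕ, ⋃ q : ℚ, {ω | c - 1/(n+1) <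
          |A (min (max (q : ℝ) (ρ ω)) t) ω - A (min (ρ ω) t) ω|} := by
      ext ω
      simp only [Set.mem_setOf_eq, Set.mem_inter_iff, Set.mem_iInter, Set.mem_iUnion]
      constructor
      · intro h
        have h' := (hitT_le_iff (hAcont ω) (hρmem ω).2 htR).1 h
        have hmin : min (ρ ω) t = ρ ω := min_eq_left h'.1
        rw [hmin]
        exact ⟨h'.1, (exists_iff_rat (hAcont ω) h'.1).1 h'.2⟩
      · rintro ⟨hρt, hq⟩
        rw [min_eq_left hρt] at hq
        exact (hitT_le_iff (hAcont ω) (hρmem ω).2 htR).2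
          ⟨hρt, (exists_iff_rat (hAcont ω) hρt).2 hq⟩
    rw [hset]
    refine (show MeasurableSet[𝒢 t] {ω | ρ ω ≤ t} by
      simpa only [WithTop.coe_le_coe] using hρ.measurableSet_le t).inter ?_
    refine MeasurableSet.iInter fun n => MeasurableSet.iUnion fun q => ?_
    have h1 := measurable_clamped (𝒢 := 𝒢) hprog hρ q t
    have h2 := measurable_min_t (𝒢 := 𝒢) hprog hρ t
    have hg : Measurable[𝒢 t] fun ω =>
        |A (min (max (q : ℝ) (ρ ω)) t) ω - A (min (ρ ω) t) ω| :=
      continuous_abs.measurable.comp (h1.sub h2)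
    exact hg measurableSet_Ioi

lemma hitT_mem_Icc0R (hρmem : ∀ ω, ρ ω ∈ Set.Icc 0 R) (ω : Ω) :
    hitT A R ρ c ω ∈ Set.Icc (0:ℝ) R := by
  have h := hitT_mem_Icc (A := A) (c := c) (hρmem ω).2
  exact ⟨le_trans (hρmem ω).1 h.1, h.2⟩

end HitAux

section OneStep

variable {Ω : Type*} {m0 : MeasurableSpace Ω} {μ : Measure Ω} [IsProbabilityMeasure μ]

lemma weighted_one_step
    (𝒢 : Filtration ℝ m0) (R : ℝ)
    (A : ℝ → Ω → ℝ) (hAadapted : Adapted 𝒢 A)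
    (hAcont : ∀ ω, Continuous fun r => A r ω)
    (Ψ : ℝ → Ω → ℝ) (θ : ℝ) (hθ0 : 0 ≤ θ)
    (hyp' : ∀ (τ : Ω → ℝ) (hτ : IsStoppingTime 𝒢 (fun ω => (τ ω : WithTop ℝ))), (∀ ω, τ ω ∈ Set.Icc 0 R) →
      ∀ C : Set Ω, MeasurableSet[hτ.measurableSpace] C → ∀ ν : ℝ, 0 < ν →
        (μ (C ∩ {ω | ν < |A R ω - A (τ ω) ω|})).toReal ≤
          θ * (μ C).toReal + (μ (C ∩ {ω | ∃ u ∈ Set.Icc (τ ω) R, ν < Ψ u ω})).toReal)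
    (σ : Ω → ℝ) (hσ : IsStoppingTime 𝒢 (fun ω => (σ ω : WithTop ℝ))) (hσmem : ∀ ω, σ ω ∈ Set.Icc 0 R)
    (B : Set Ω) (hB : MeasurableSet[hσ.measurableSpace] B)
    (c ν : ℝ) (hc : 0 < c) (hν : 0 < ν) :
    (μ (B ∩ {ω | ∃ u ∈ Set.Icc (σ ω) R, c + 4*ν < |A u ω - A (σ ω) ω|})).toReal ≤
      2*θ*(μ (B ∩ {ω | ∃ u ∈ Set.Icc (σ ω) R, c < |A u ω - A (σ ω) ω|})).toReal
      + 2*(μ (B ∩ {ω | ∃ u ∈ Set.Icc (σ ω) R, ν < Ψ u ω})).toReal := by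
  have hprog : ProgMeasurable 𝒢 A := StronglyAdapted.progMeasurable_of_continuous
    (fun i => (hAadapted i).stronglyMeasurable) hAcont
  -- first hitting time of level c + ν
  set τ₁ : Ω → ℝ := hitT A R σ (c + ν) with hτ₁def
  have hτ₁ : IsStoppingTime 𝒢 (fun ω => (τ₁ ω : WithTop ℝ)) := hitT_isStoppingTime hAadapted hAcont hσ hσmem
  have hτ₁mem : ∀ ω, τ₁ ω ∈ Set.Icc 0 R := hitT_mem_Icc0R hσmem
  have hστ₁ : ∀ ω, σ ω ≤ τ₁ ω := fun ω => (hitT_mem_Icc (hσmem ω).2).1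
  -- second hitting time (relative to τ₁) of level 3ν
  set τ₂ : Ω → ℝ := hitT A R τ₁ (3*ν) with hτ₂def
  have hτ₂ : IsStoppingTime 𝒢 (fun ω => (τ₂ ω : WithTop ℝ)) := hitT_isStoppingTime hAadapted hAcont hτ₁ hτ₁mem
  have hτ₂mem : ∀ ω, τ₂ ω ∈ Set.Icc 0 R := hitT_mem_Icc0R hτ₁mem
  have hτ₁τ₂ : ∀ ω, τ₁ ω ≤ τ₂ ω := fun ω => (hitT_mem_Icc (hτ₁mem ω).2).1
  -- hit events and conditioned sets
  set H₁ : Set Ω := {ω | c + ν ≤ |A (τ₁ ω) ω - A (σ ω) ω|} with hH₁def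
  set H₂ : Set Ω := {ω | 3*ν ≤ |A (τ₂ ω) ω - A (τ₁ ω) ω|} with hH₂def
  set B₁ : Set Ω := B ∩ H₁ with hB₁def
  set B₂ : Set Ω := B₁ ∩ H₂ with hB₂def
  -- measurability
  have hsvτ₁ : Measurable[hτ₁.measurableSpace] fun ω => A (τ₁ ω) ω :=
    measurable_stoppedValue hprog hτ₁
  have hsvστ₁ : Measurable[hτ₁.measurableSpace] fun ω => A (σ ω) ω :=
    (measurable_stoppedValue hprog hσ).mono (hσ.measurableSpace_mono hτ₁ (fun ω => WithTop.coe_le_coe.2 (hστ₁ ω))) le_rfl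
  have hH₁meas : MeasurableSet[hτ₁.measurableSpace] H₁ :=
    (continuous_abs.measurable.comp (hsvτ₁.sub hsvστ₁)) measurableSet_Ici
  have hB₁meas : MeasurableSet[hτ₁.measurableSpace] B₁ :=
    ((hσ.measurableSpace_mono hτ₁ (fun ω => WithTop.coe_le_coe.2 (hστ₁ ω))) B hB).inter hH₁meas
  have hsvτ₂ : Measurable[hτ₂.measurableSpace] fun ω => A (τ₂ ω) ω :=
    measurable_stoppedValue hprog hτ₂
  have hsvτ₁τ₂ : Measurable[hτ₂.measurableSpace] fun ω => A (τ₁ ω) ω :=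
    (measurable_stoppedValue hprog hτ₁).mono (hτ₁.measurableSpace_mono hτ₂ (fun ω => WithTop.coe_le_coe.2 (hτ₁τ₂ ω))) le_rfl
  have hH₂meas : MeasurableSet[hτ₂.measurableSpace] H₂ :=
    (continuous_abs.measurable.comp (hsvτ₂.sub hsvτ₁τ₂)) measurableSet_Ici
  have hB₂meas : MeasurableSet[hτ₂.measurableSpace] B₂ :=
    ((hτ₁.measurableSpace_mono hτ₂ (fun ω => WithTop.coe_le_coe.2 (hτ₁τ₂ ω))) B₁ hB₁meas).inter hH₂meas
  -- the key pointwise inclusion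
  have hincl : B ∩ {ω | ∃ u ∈ Set.Icc (σ ω) R, c + 4*ν < |A u ω - A (σ ω) ω|} ⊆
      (B₁ ∩ {ω | ν < |A R ω - A (τ₁ ω) ω|}) ∪ (B₂ ∩ {ω | ν < |A R ω - A (τ₂ ω) ω|}) := by
    rintro ω ⟨hωB, u, hu, hval⟩
    have hex₁ : ∃ u ∈ Set.Icc (σ ω) R, c + ν ≤ |A u ω - A (σ ω) ω| :=
      ⟨u, hu, by linarith⟩
    have hωH₁ : ω ∈ H₁ := (hitT_event (hAcont ω) (hσmem ω).2).1 hex₁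
    have hval₁ : |A (τ₁ ω) ω - A (σ ω) ω| = c + ν :=
      hitT_value (hAcont ω) (by linarith) (hσmem ω).2 hex₁
    have huτ₁ : τ₁ ω ≤ u := hitT_le hu (by linarith)
    have hincr : 3*ν < |A u ω - A (τ₁ ω) ω| := by
      have habs : |A u ω - A (σ ω) ω| - |A (τ₁ ω) ω - A (σ ω) ω| ≤ |A u ω - A (τ₁ ω) ω| := by
        have h1 := abs_sub_abs_le_abs_sub (A u ω - A (σ ω) ω) (A (τ₁ ω) ω - A (σ ω) ω)
        have h2 : (A u ω - A (σ ω) ω) - (A (τ₁ ω) ω - A (σ ω) ω) = A u ω - A (τ₁ ω) ω := by ring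
        rwa [h2] at h1
      linarith
    have hex₂ : ∃ v ∈ Set.Icc (τ₁ ω) R, 3*ν ≤ |A v ω - A (τ₁ ω) ω| :=
      ⟨u, ⟨huτ₁, hu.2⟩, hincr.le⟩
    have hωH₂ : ω ∈ H₂ := (hitT_event (hAcont ω) (hτ₁mem ω).2).1 hex₂
    have hval₂ : |A (τ₂ ω) ω - A (τ₁ ω) ω| = 3*ν :=
      hitT_value (hAcont ω) (by linarith) (hτ₁mem ω).2 hex₂
    by_cases hcase : ν < |A R ω - A (τ₁ ω) ω|
    · exact Or.inl ⟨⟨hωB, hωH₁⟩, hcase⟩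
    · push_neg at hcase
      refine Or.inr ⟨⟨⟨hωB, hωH₁⟩, hωH₂⟩, ?_⟩
      have habs : |A (τ₂ ω) ω - A (τ₁ ω) ω| - |A R ω - A (τ₁ ω) ω| ≤ |A R ω - A (τ₂ ω) ω| := by
        have h1 := abs_sub_abs_le_abs_sub (A (τ₂ ω) ω - A (τ₁ ω) ω) (A R ω - A (τ₁ ω) ω)
        have h2 : (A (τ₂ ω) ω - A (τ₁ ω) ω) - (A R ω - A (τ₁ ω) ω) = A (τ₂ ω) ω - A R ω := by
          ring
        rw [h2, abs_sub_comm (A (τ₂ ω) ω) (A R ω)] at h1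
        exact h1
      show ν < |A R ω - A (τ₂ ω) ω|
      linarith
  -- B₁ ⊆ B ∩ {sup > c}
  have hB₁sub : B₁ ⊆ B ∩ {ω | ∃ u ∈ Set.Icc (σ ω) R, c < |A u ω - A (σ ω) ω|} := by
    rintro ω ⟨hωB, hωH₁⟩
    have hval : c + ν ≤ |A (τ₁ ω) ω - A (σ ω) ω| := hωH₁
    exact ⟨hωB, τ₁ ω, hitT_mem_Icc (hσmem ω).2, by linarith⟩
  have hB₂sub : B₂ ⊆ B₁ := Set.inter_subset_left
  -- weight-set inclusions
  have hW₁sub : B₁ ∩ {ω | ∃ u ∈ Set.Icc (τ₁ ω) R, ν < Ψ u ω} ⊆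
      B ∩ {ω | ∃ u ∈ Set.Icc (σ ω) R, ν < Ψ u ω} := by
    rintro ω ⟨hωB₁, u, hu, hΨu⟩
    exact ⟨hωB₁.1, u, ⟨le_trans (hστ₁ ω) hu.1, hu.2⟩, hΨu⟩
  have hW₂sub : B₂ ∩ {ω | ∃ u ∈ Set.Icc (τ₂ ω) R, ν < Ψ u ω} ⊆
      B ∩ {ω | ∃ u ∈ Set.Icc (σ ω) R, ν < Ψ u ω} := by
    rintro ω ⟨hωB₂, u, hu, hΨu⟩
    exact ⟨hωB₂.1.1, u, ⟨le_trans (le_trans (hστ₁ ω) (hτ₁τ₂ ω)) hu.1, hu.2⟩, hΨu⟩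
  -- apply the hypothesis at τ₁ and τ₂
  have happ₁ := hyp' τ₁ hτ₁ hτ₁mem B₁ hB₁meas ν hν
  have happ₂ := hyp' τ₂ hτ₂ hτ₂mem B₂ hB₂meas ν hν
  -- measure arithmetic
  have hfin : ∀ s : Set Ω, μ s ≠ ⊤ := fun s => measure_ne_top μ s
  have hsplit : (μ (B ∩ {ω | ∃ u ∈ Set.Icc (σ ω) R, c + 4*ν < |A u ω - A (σ ω) ω|})).toReal ≤
      (μ (B₁ ∩ {ω | ν < |A R ω - A (τ₁ ω) ω|})).toReal +
      (μ (B₂ ∩ {ω | ν < |A R ω - A (τ₂ ω) ω|})).toReal := by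
    rw [← ENNReal.toReal_add (hfin _) (hfin _)]
    exact ENNReal.toReal_mono (ENNReal.add_ne_top.2 ⟨hfin _, hfin _⟩)
      (le_trans (measure_mono hincl) (measure_union_le _ _))
  have hmono : ∀ {s t : Set Ω}, s ⊆ t → (μ s).toReal ≤ (μ t).toReal := fun h =>
    ENNReal.toReal_mono (hfin _) (measure_mono h)
  calc (μ (B ∩ {ω | ∃ u ∈ Set.Icc (σ ω) R, c + 4*ν < |A u ω - A (σ ω) ω|})).toReal
      ≤ (μ (B₁ ∩ {ω | ν < |A R ω - A (τ₁ ω) ω|})).toReal +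
        (μ (B₂ ∩ {ω | ν < |A R ω - A (τ₂ ω) ω|})).toReal := hsplit
    _ ≤ (θ * (μ B₁).toReal + (μ (B₁ ∩ {ω | ∃ u ∈ Set.Icc (τ₁ ω) R, ν < Ψ u ω})).toReal) +
        (θ * (μ B₂).toReal + (μ (B₂ ∩ {ω | ∃ u ∈ Set.Icc (τ₂ ω) R, ν < Ψ u ω})).toReal) :=
        add_le_add happ₁ happ₂
    _ ≤ (θ * (μ (B ∩ {ω | ∃ u ∈ Set.Icc (σ ω) R, c < |A u ω - A (σ ω) ω|})).toReal +
          (μ (B ∩ {ω | ∃ u ∈ Set.Icc (σ ω) R, ν < Ψ u ω})).toReal) +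
        (θ * (μ (B ∩ {ω | ∃ u ∈ Set.Icc (σ ω) R, c < |A u ω - A (σ ω) ω|})).toReal +
          (μ (B ∩ {ω | ∃ u ∈ Set.Icc (σ ω) R, ν < Ψ u ω})).toReal) := by
        refine add_le_add (add_le_add ?_ (hmono hW₁sub)) (add_le_add ?_ (hmono hW₂sub))
        · exact mul_le_mul_of_nonneg_left (hmono hB₁sub) hθ0
        · exact mul_le_mul_of_nonneg_left (hmono (hB₂sub.trans hB₁sub)) hθ0
    _ = 2*θ*(μ (B ∩ {ω | ∃ u ∈ Set.Icc (σ ω) R, c < |A u ω - A (σ ω) ω|})).toReal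
        + 2*(μ (B ∩ {ω | ∃ u ∈ Set.Icc (σ ω) R, ν < Ψ u ω})).toReal := by ring

end OneStep

set_option maxHeartbeats 2000000 in
theorem weighted_good_lambda
    {Ω : Type*} {m0 : MeasurableSpace Ω} {μ : Measure Ω} [IsProbabilityMeasure μ]
    (𝒢 : Filtration ℝ m0) (R : ℝ) (hR : 0 < R)
    (A : ℝ → Ω → ℝ) (hAadapted : Adapted 𝒢 A)
    (hAcont : ∀ ω, Continuous fun r => A r ω) (hA0 : ∀ ω, A 0 ω = 0)
    (Ψ : ℝ → Ω → ℝ) (hΨadapted : Adapted 𝒢 Ψ)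
    (hΨpos : ∀ r ω, 0 < Ψ r ω)
    (hΨright : ∀ ω r, ContinuousWithinAt (fun u => Ψ u ω) (Set.Ici r) r)
    (hΨleft : ∀ ω r, ∃ l : ℝ, Tendsto (fun u => Ψ u ω) (nhdsWithin r (Set.Iio r)) (nhds l))
    (θ : ℝ) (hθ0 : 0 < θ) (hθ : θ < 1 / 2)
    (hyp : ∀ (σ : Ω → ℝ) (hσ : IsStoppingTime 𝒢 (fun ω => (σ ω : WithTop ℝ))), (∀ ω, σ ω ∈ Set.Icc 0 R) →
      ∀ B : Set Ω, MeasurableSet[hσ.measurableSpace] B → 0 < μ B → ∀ ν : ℝ, 0 < ν →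
        (μ (B ∩ {ω | ν < |A R ω - A (σ ω) ω|})).toReal / (μ B).toReal ≤
          θ + (μ (B ∩ {ω | ∃ u ∈ Set.Icc (σ ω) R, ν < Ψ u ω})).toReal / (μ B).toReal) :
    ∃ a > (0 : ℝ), ∃ α > (0 : ℝ),
      ∀ (σ : Ω → ℝ) (hσ : IsStoppingTime 𝒢 (fun ω => (σ ω : WithTop ℝ))), (∀ ω, σ ω ∈ Set.Icc 0 R) →
      ∀ B : Set Ω, MeasurableSet[hσ.measurableSpace] B → 0 < μ B →
      ∀ lam mu ν : ℝ, 0 < lam → 0 < mu → 0 < ν →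
        (μ (B ∩ {ω | ∃ u ∈ Set.Icc (σ ω) R,
            lam + a * mu * ν < |A u ω - A (σ ω) ω|})).toReal / (μ B).toReal ≤
          Real.exp (1 - mu) *
            ((μ (B ∩ {ω | ∃ u ∈ Set.Icc (σ ω) R,
              lam < |A u ω - A (σ ω) ω|})).toReal / (μ B).toReal) +
          α * (μ (B ∩ {ω | ∃ u ∈ Set.Icc (σ ω) R, ν < Ψ u ω})).toReal / (μ B).toReal := by
  have hfin : ∀ s : Set Ω, μ s ≠ ⊤ := fun s => measure_ne_top μ s
  have hmono : ∀ {s t : Set Ω}, s ⊆ t → (μ s).toReal ≤ (μ t).toReal := fun h =>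
    ENNReal.toReal_mono (hfin _) (measure_mono h)
  -- massage the hypothesis into multiplied form, allowing null sets
  have hyp' : ∀ (τ : Ω → ℝ) (hτ : IsStoppingTime 𝒢 (fun ω => (τ ω : WithTop ℝ))), (∀ ω, τ ω ∈ Set.Icc 0 R) →
      ∀ C : Set Ω, MeasurableSet[hτ.measurableSpace] C → ∀ ν : ℝ, 0 < ν →
        (μ (C ∩ {ω | ν < |A R ω - A (τ ω) ω|})).toReal ≤
          θ * (μ C).toReal + (μ (C ∩ {ω | ∃ u ∈ Set.Icc (τ ω) R, ν < Ψ u ω})).toReal := by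
    intro τ hτ hτmem C hC ν hν
    rcases eq_or_lt_of_le (zero_le : 0 ≤ μ C) with hC0 | hC0
    · have h1 : (μ (C ∩ {ω | ν < |A R ω - A (τ ω) ω|})).toReal = 0 := by
        have : μ (C ∩ {ω | ν < |A R ω - A (τ ω) ω|}) = 0 :=
          le_antisymm (le_trans (measure_mono Set.inter_subset_left) hC0.ge) zero_le
        rw [this]; rfl
      rw [h1]
      positivity
    · have h := hyp τ hτ hτmem C hC hC0 ν hν
      have hCpos : 0 < (μ C).toReal := ENNReal.toReal_pos hC0.ne' (hfin C)
      rw [div_le_iff₀ hCpos] at h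
      calc (μ (C ∩ {ω | ν < |A R ω - A (τ ω) ω|})).toReal
          ≤ (θ + (μ (C ∩ {ω | ∃ u ∈ Set.Icc (τ ω) R, ν < Ψ u ω})).toReal / (μ C).toReal) *
            (μ C).toReal := h
        _ = θ * (μ C).toReal + (μ (C ∩ {ω | ∃ u ∈ Set.Icc (τ ω) R, ν < Ψ u ω})).toReal := by
            field_simp
  -- constants
  set L : ℝ := -Real.log (2*θ) with hLdef
  have h2θ : 0 < 2*θ := by linarith
  have h2θ1 : 2*θ < 1 := by linarith
  have hL : 0 < L := by
    have := Real.log_neg h2θ h2θ1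
    simp only [hLdef]
    linarith
  set a : ℝ := 4*(1/L + 1) with hadef
  have ha : 0 < a := by positivity
  set α : ℝ := 2/(1 - 2*θ) with hαdef
  have hα : 0 < α := by
    apply div_pos two_pos; linarith
  refine ⟨a, ha, α, hα, ?_⟩
  intro σ hσ hσmem B hB hμB lam mu ν hlam hmu hν
  have hmB : 0 < (μ B).toReal := ENNReal.toReal_pos hμB.ne' (hfin B)
  set W : ℝ := (μ (B ∩ {ω | ∃ u ∈ Set.Icc (σ ω) R, ν < Ψ u ω})).toReal with hWdef
  have hW0 : 0 ≤ W := ENNReal.toReal_nonneg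
  -- the iteration
  set p : ℕ → ℝ := fun k =>
    (μ (B ∩ {ω | ∃ u ∈ Set.Icc (σ ω) R, lam + 4*k*ν < |A u ω - A (σ ω) ω|})).toReal with hpdef
  have hp0 : p 0 = (μ (B ∩ {ω | ∃ u ∈ Set.Icc (σ ω) R, lam < |A u ω - A (σ ω) ω|})).toReal := by
    simp only [hpdef, Nat.cast_zero]
    norm_num
  have hpmono : ∀ {x y : ℝ}, x ≤ y →
      (μ (B ∩ {ω | ∃ u ∈ Set.Icc (σ ω) R, y < |A u ω - A (σ ω) ω|})).toReal ≤
      (μ (B ∩ {ω | ∃ u ∈ Set.Icc (σ ω) R, x < |A u ω - A (σ ω) ω|})).toReal := by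
    intro x y hxy
    apply hmono
    rintro ω ⟨hωB, u, hu, hval⟩
    exact ⟨hωB, u, hu, lt_of_le_of_lt hxy hval⟩
  have hstep : ∀ k : ℕ, p (k+1) ≤ 2*θ * p k + 2*W := by
    intro k
    have hc : 0 < lam + 4*(k:ℝ)*ν := by positivity
    have h := weighted_one_step 𝒢 R A hAadapted hAcont Ψ θ hθ0.le hyp' σ hσ hσmem B hB
      (lam + 4*(k:ℝ)*ν) ν hc hν
    have heq : lam + 4*((k:ℕ)+1:ℕ)*ν = (lam + 4*(k:ℝ)*ν) + 4*ν := by push_cast; ring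
    calc p (k+1) = (μ (B ∩ {ω | ∃ u ∈ Set.Icc (σ ω) R,
          (lam + 4*(k:ℝ)*ν) + 4*ν < |A u ω - A (σ ω) ω|})).toReal := by
          simp only [hpdef]
          congr 2
          ext ω
          constructor
          · rintro ⟨hωB, u, hu, hval⟩
            exact ⟨hωB, u, hu, by push_cast at hval ⊢; linarith⟩
          · rintro ⟨hωB, u, hu, hval⟩
            exact ⟨hωB, u, hu, by push_cast at hval ⊢; linarith⟩
      _ ≤ 2*θ * p k + 2*W := h
  have hiter : ∀ k : ℕ, p k ≤ (2*θ)^k * p 0 + α * W := by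
    intro k
    induction k with
    | zero => simp only [pow_zero, one_mul]; nlinarith
    | succ k ih =>
      calc p (k+1) ≤ 2*θ * p k + 2*W := hstep k
        _ ≤ 2*θ * ((2*θ)^k * p 0 + α * W) + 2*W := by
            have hpk0 : 0 ≤ (2*θ) := by linarith
            nlinarith [hpk0, ih]
        _ = 2*θ * (2*θ)^k * p 0 + (2*θ*α + 2) * W := by ring
        _ = (2*θ)^(k+1) * p 0 + α * W := by
            have h12 : (1:ℝ) - 2*θ ≠ 0 := by linarith
            have hα2 : 2*θ * α + 2 = α := by
              rw [hαdef]
              field_simp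
              ring
            rw [hα2, pow_succ]
            ring
  -- now choose k depending on mu
  rcases le_or_gt mu 1 with hmu1 | hmu1
  · -- trivial case
    have hsub : (μ (B ∩ {ω | ∃ u ∈ Set.Icc (σ ω) R,
        lam + a*mu*ν < |A u ω - A (σ ω) ω|})).toReal ≤
        (μ (B ∩ {ω | ∃ u ∈ Set.Icc (σ ω) R, lam < |A u ω - A (σ ω) ω|})).toReal :=
      hpmono (by nlinarith [mul_pos (mul_pos ha hmu) hν])
    have hexp : (1:ℝ) ≤ Real.exp (1 - mu) := Real.one_le_exp (by linarith)
    have h1 : (μ (B ∩ {ω | ∃ u ∈ Set.Icc (σ ω) R,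
        lam + a*mu*ν < |A u ω - A (σ ω) ω|})).toReal / (μ B).toReal ≤
        (μ (B ∩ {ω | ∃ u ∈ Set.Icc (σ ω) R, lam < |A u ω - A (σ ω) ω|})).toReal /
          (μ B).toReal := div_le_div_of_nonneg_right hsub hmB.le
    have h2 : 0 ≤ (μ (B ∩ {ω | ∃ u ∈ Set.Icc (σ ω) R,
        lam < |A u ω - A (σ ω) ω|})).toReal / (μ B).toReal := by positivity
    have h3 : 0 ≤ α * (μ (B ∩ {ω | ∃ u ∈ Set.Icc (σ ω) R, ν < Ψ u ω})).toReal /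
        (μ B).toReal := by positivity
    nlinarith [h1, hexp, h2, h3, mul_nonneg (by linarith : (0:ℝ) ≤ Real.exp (1 - mu) - 1) h2]
  · -- main case: mu > 1
    obtain ⟨k, hkL, hkle⟩ : ∃ k : ℕ, mu - 1 ≤ (k:ℝ) * L ∧ (k:ℝ) ≤ (mu - 1)/L + 1 := by
      refine ⟨⌈(mu - 1)/L⌉₊, ?_, ?_⟩
      · have h := Nat.le_ceil ((mu - 1)/L)
        rw [div_le_iff₀ hL] at h
        linarith
      · exact (Nat.ceil_lt_add_one (div_nonneg (by linarith) hL.le)).le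
    have hLne : L ≠ 0 := hL.ne'
    have hkL2 : (k:ℝ)*L ≤ (mu - 1) + L := by
      have := mul_le_mul_of_nonneg_right hkle hL.le
      rwa [add_mul, one_mul, div_mul_cancel₀ _ hLne] at this
    have hak : 4*(k:ℝ) ≤ a * mu := by
      rw [← mul_le_mul_iff_of_pos_right hL]
      have he : a * mu * L = 4*mu + 4*mu*L := by
        rw [hadef]; field_simp
      rw [he]
      nlinarith [hkL2, hL, mul_nonneg (by linarith : (0:ℝ) ≤ mu - 1) hL.le]
    have hpow : (2*θ)^k ≤ Real.exp (1 - mu) := by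
      have : (2*θ)^k = Real.exp ((k:ℝ) * Real.log (2*θ)) := by
        rw [← Real.log_pow, Real.exp_log (pow_pos h2θ k)]
      rw [this]
      apply Real.exp_le_exp.2
      have : Real.log (2*θ) = -L := by simp [hLdef]
      rw [this]
      linarith
    have hsub : (μ (B ∩ {ω | ∃ u ∈ Set.Icc (σ ω) R,
        lam + a*mu*ν < |A u ω - A (σ ω) ω|})).toReal ≤ p k := by
      have hx : lam + 4*(k:ℝ)*ν ≤ lam + a*mu*ν := by
        nlinarith [mul_le_mul_of_nonneg_right hak hν.le]
      simp only [hpdef]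
      exact hpmono hx
    have hfinal : (μ (B ∩ {ω | ∃ u ∈ Set.Icc (σ ω) R,
        lam + a*mu*ν < |A u ω - A (σ ω) ω|})).toReal ≤
        Real.exp (1 - mu) * p 0 + α * W := by
      have h1 := hiter k
      have hp00 : 0 ≤ p 0 := ENNReal.toReal_nonneg
      nlinarith [hpow, hp00]
    rw [hp0] at hfinal
    calc (μ (B ∩ {ω | ∃ u ∈ Set.Icc (σ ω) R,
          lam + a*mu*ν < |A u ω - A (σ ω) ω|})).toReal / (μ B).toReal
        ≤ (Real.exp (1 - mu) *
            (μ (B ∩ {ω | ∃ u ∈ Set.Icc (σ ω) R, lam < |A u ω - A (σ ω) ω|})).toReal +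
            α * W) / (μ B).toReal := div_le_div_of_nonneg_right hfinal hmB.le
      _ = Real.exp (1 - mu) *
            ((μ (B ∩ {ω | ∃ u ∈ Set.Icc (σ ω) R,
              lam < |A u ω - A (σ ω) ω|})).toReal / (μ B).toReal) +
          α * W / (μ B).toReal := by
          rw [add_div, mul_div_assoc]
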